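/- arXiv:2601.11839 — 2 statements merged into one kernel-verified Lean document; each statement's English description precedes it below -/
import Mathlib

section
/- Let L be a lattice in R^n with dual lattice L*, and let Y ⊆ R^n be an open set such that (Y+ν) ∩ (Y+κ) = ∅ for all distinct ν, κ ∈ L*. If g ∈ L^1(R^n) vanishes a.e. on R^n \ Y and ĝ(ℓ) = 0 for all ℓ ∈ L, then g = 0 a.e. -/
open MeasureTheory Matrix Set

noncomputable section

namespace Statement3Aux

open Function Submodule Complex

local instance fact1 : Fact ((0:ℝ) < 1) := ⟨one_pos⟩

abbrev Torus (n : ℕ) := Fin n → AddCircle (1:ℝ)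

variable {n : ℕ}

/-- Multidimensional exponential character on the torus. -/
def mchar (k : Fin n → ℤ) : C(Torus n, ℂ) :=
  ⟨fun z => ∏ i, fourier (k i) (z i), by
    apply continuous_finset_prod
    exact fun i _ => (fourier (k i)).continuous.comp (continuous_apply i)⟩

@[simp] lemma mchar_apply (k : Fin n → ℤ) (z : Torus n) :
    mchar k z = ∏ i, fourier (k i) (z i) := rfl

lemma mchar_zero : mchar (0 : Fin n → ℤ) = 1 := by
  ext z
  simp [mchar_apply, fourier_zero]

lemma mchar_add (k k' : Fin n → ℤ) : mchar (k + k') = mchar k * mchar k' := by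
  ext z
  simp only [mchar_apply, ContinuousMap.mul_apply, Pi.add_apply, fourier_add]
  rw [Finset.prod_mul_distrib]

lemma mchar_neg (k : Fin n → ℤ) : mchar (-k) = star (mchar k) := by
  ext z
  simp only [mchar_apply, ContinuousMap.coe_star, Pi.star_apply, Pi.neg_apply, fourier_neg]
  rw [RCLike.star_def, map_prod]

/-- The star subalgebra generated by the characters. -/
def mcharSubalgebra (n : ℕ) : StarSubalgebra ℂ C(Torus n, ℂ) where
  toSubalgebra := Algebra.adjoin ℂ (range (mchar (n := n)))
  star_mem' := by
    show Algebra.adjoin ℂ (range (mchar (n := n))) ≤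
      star (Algebra.adjoin ℂ (range (mchar (n := n))))
    refine Algebra.adjoin_le ?_
    rintro - ⟨k, rfl⟩
    exact Algebra.subset_adjoin ⟨-k, mchar_neg k⟩

lemma mcharSubalgebra_coe (n : ℕ) :
    Subalgebra.toSubmodule (mcharSubalgebra n).toSubalgebra
      = span ℂ (range (mchar (n := n))) := by
  apply Algebra.adjoin_eq_span_of_subset
  refine Subset.trans ?_ Submodule.subset_span
  intro x hx
  refine Submonoid.closure_induction (fun _ => id) ⟨0, mchar_zero.symm ▸ rfl⟩ ?_ hx
  · rintro - - - - ⟨a, rfl⟩ ⟨b, rfl⟩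
    exact ⟨a + b, (mchar_add a b).symm ▸ rfl⟩

lemma mcharSubalgebra_separatesPoints (n : ℕ) : (mcharSubalgebra n).SeparatesPoints := by
  intro z w hzw
  obtain ⟨i, hi⟩ := Function.ne_iff.mp hzw
  refine ⟨_, ⟨mchar (Pi.single i 1), Algebra.subset_adjoin ⟨_, rfl⟩, rfl⟩, ?_⟩
  have hev : ∀ u : Torus n, mchar (Pi.single i 1) u = AddCircle.toCircle (u i) := by
    intro u
    rw [mchar_apply, Finset.prod_eq_single i]
    · simp [fourier_one]
    · intro j _ hj
      simp [Pi.single_eq_of_ne hj, fourier_zero]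
    · simp
  dsimp only
  rw [hev, hev]
  intro h
  exact hi (AddCircle.injective_toCircle one_ne_zero (Subtype.coe_inj.mp h))

lemma dense_span_mchar (n : ℕ) :
    Dense ((span ℂ (range (mchar (n := n))) : Submodule ℂ C(Torus n, ℂ)) : Set C(Torus n, ℂ)) := by
  have h := ContinuousMap.starSubalgebra_topologicalClosure_eq_top_of_separatesPoints
    (mcharSubalgebra n) (mcharSubalgebra_separatesPoints n)
  have h2 : (span ℂ (range (mchar (n := n)))).topologicalClosure = ⊤ := by
    rw [← mcharSubalgebra_coe]
    exact congr_arg (Subalgebra.toSubmodule <| StarSubalgebra.toSubalgebra ·) h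
  rw [← Submodule.dense_iff_topologicalClosure_eq_top] at h2
  exact h2

end Statement3Aux

open Statement3Aux Function Topology

/-- The Fourier transform with the convention `ĝ(ω) = ∫ g(x) e^{2πi ω·x} dx`. -/
def fourierT {n : ℕ} (g : (Fin n → ℝ) → ℂ) (ω : Fin n → ℝ) : ℂ :=
  ∫ x : Fin n → ℝ, g x * Complex.exp (2 * Real.pi * Complex.I * (∑ i, ω i * x i))

theorem statement3 (n : ℕ) (B : Matrix (Fin n) (Fin n) ℝ) (hB : IsUnit B.det)
    (Y : Set (Fin n → ℝ)) (hY : IsOpen Y)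
    (hdisj : ∀ k k' : Fin n → ℤ, k ≠ k' →
      Disjoint ((fun θ => θ + (B⁻¹)ᵀ.mulVec fun i => (k i : ℝ)) '' Y)
        ((fun θ => θ + (B⁻¹)ᵀ.mulVec fun i => (k' i : ℝ)) '' Y))
    (g : (Fin n → ℝ) → ℂ) (hg : Integrable g)
    (hsupp : ∀ᵐ θ : Fin n → ℝ, θ ∉ Y → g θ = 0)
    (hFT : ∀ k : Fin n → ℤ, fourierT g (B.mulVec fun i => (k i : ℝ)) = 0) :
    ∀ᵐ θ : Fin n → ℝ, g θ = 0 := by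
  classical
  set ν : (Fin n → ℤ) → (Fin n → ℝ) := fun k => (B⁻¹)ᵀ.mulVec (fun i => (k i : ℝ)) with hν
  set p : (Fin n → ℝ) → Torus n := fun x i => ((Bᵀ.mulVec x) i : AddCircle (1:ℝ)) with hp
  -- Bᵀ (ν k) = k
  have h1 : ∀ k : Fin n → ℤ, Bᵀ.mulVec (ν k) = fun i => (k i : ℝ) := by
    intro k
    rw [hν]
    rw [Matrix.mulVec_mulVec, ← Matrix.transpose_mul, Matrix.nonsing_inv_mul B hB,
      Matrix.transpose_one, Matrix.one_mulVec]
  have h1' : ∀ v : Fin n → ℝ, (B⁻¹)ᵀ.mulVec (Bᵀ.mulVec v) = v := by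
    intro v
    rw [Matrix.mulVec_mulVec, ← Matrix.transpose_mul, Matrix.mul_nonsing_inv B hB,
      Matrix.transpose_one, Matrix.one_mulVec]
  have hνadd : ∀ a b : Fin n → ℤ, ν (a + b) = ν a + ν b := by
    intro a b
    rw [hν]
    have : (fun i => ((a + b) i : ℝ)) = (fun i => (a i : ℝ)) + fun i => (b i : ℝ) := by
      funext i; simp
    simp only [this, Matrix.mulVec_add]
  have hν0 : ν 0 = 0 := by
    rw [hν]
    have : (fun i => ((0 : Fin n → ℤ) i : ℝ)) = (0 : Fin n → ℝ) := by funext i; simp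
    simp only [this, Matrix.mulVec_zero]
  -- p is periodic under lattice translations
  have hpper : ∀ (x : Fin n → ℝ) (k : Fin n → ℤ), p (x + ν k) = p x := by
    intro x k
    funext i
    show (((Bᵀ.mulVec (x + ν k)) i : ℝ) : AddCircle (1:ℝ)) = ((Bᵀ.mulVec x) i : ℝ)
    rw [Matrix.mulVec_add, h1]
    have : (Bᵀ.mulVec x + fun i => (k i : ℝ)) i = (Bᵀ.mulVec x) i + (k i : ℝ) := rfl
    rw [this, eq_comm, QuotientAddGroup.eq]
    refine AddSubgroup.mem_zmultiples_iff.mpr ⟨k i, ?_⟩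
    simp
  -- fibers of p are lattice orbits
  have hpfiber : ∀ x y : Fin n → ℝ, p x = p y → ∃ k : Fin n → ℤ, y = x + ν k := by
    intro x y h
    have h' : ∀ i, ∃ m : ℤ, (Bᵀ.mulVec y) i - (Bᵀ.mulVec x) i = m := by
      intro i
      have hi := congrFun h i
      rw [QuotientAddGroup.eq] at hi
      obtain ⟨m, hm⟩ := AddSubgroup.mem_zmultiples_iff.mp hi
      refine ⟨m, ?_⟩
      have hm' : (m : ℝ) = -(Bᵀ.mulVec x) i + (Bᵀ.mulVec y) i := by
        rw [← hm]; simp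
      linarith
    choose k hk using h'
    refine ⟨k, ?_⟩
    have hBy : Bᵀ.mulVec y = Bᵀ.mulVec x + fun i => (k i : ℝ) := by
      funext i
      have := hk i
      simp only [Pi.add_apply]
      linarith
    have h2 := congrArg ((B⁻¹)ᵀ.mulVec) hBy
    rw [h1', Matrix.mulVec_add, h1'] at h2
    exact h2
  have hpcont : Continuous p := by
    refine continuous_pi fun i => Continuous.comp ?_ ((continuous_apply i).comp
      (LinearMap.toContinuousLinearMap (Matrix.mulVecLin Bᵀ)).continuous)
    exact continuous_quotient_mk'
  have hpsurj : Surjective p := by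
    intro z
    choose a ha using fun i => Quotient.exists_rep (z i)
    refine ⟨(B⁻¹)ᵀ.mulVec a, ?_⟩
    funext i
    show (((Bᵀ.mulVec ((B⁻¹)ᵀ.mulVec a)) i : ℝ) : AddCircle (1:ℝ)) = z i
    rw [Matrix.mulVec_mulVec, ← Matrix.transpose_mul, Matrix.nonsing_inv_mul B hB,
      Matrix.transpose_one, Matrix.one_mulVec]
    exact ha i
  have hpopen : IsOpenMap p := by
    have hq : IsOpenMap (fun a : Fin n → ℝ => fun i => ((a i : ℝ) : AddCircle (1:ℝ))) := by
      have := IsOpenMap.piMap (f := fun (i : Fin n) (x : ℝ) => (x : AddCircle (1:ℝ)))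
        (fun i => QuotientAddGroup.isOpenMap_coe)
        (Filter.Eventually.of_forall fun i => QuotientAddGroup.mk_surjective)
      exact this
    have hL : IsOpenMap (fun x : Fin n → ℝ => Bᵀ.mulVec x) := by
      apply IsOpenMap.of_inverse (f' := fun y => (B⁻¹)ᵀ.mulVec y)
      · exact (LinearMap.toContinuousLinearMap (Matrix.mulVecLin (B⁻¹)ᵀ)).continuous
      · intro v
        show Bᵀ.mulVec ((B⁻¹)ᵀ.mulVec v) = v
        rw [Matrix.mulVec_mulVec, ← Matrix.transpose_mul, Matrix.nonsing_inv_mul B hB,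
          Matrix.transpose_one, Matrix.one_mulVec]
      · intro v
        show (B⁻¹)ᵀ.mulVec (Bᵀ.mulVec v) = v
        exact h1' v
    exact hq.comp hL
  have hpquot : IsQuotientMap p := hpopen.isQuotientMap hpcont hpsurj
  -- characters pulled back to ℝⁿ
  have hcharp : ∀ (k : Fin n → ℤ) (x : Fin n → ℝ),
      mchar k (p x) = Complex.exp (2 * Real.pi * Complex.I *
        (∑ i, (B.mulVec fun i => (k i : ℝ)) i * x i)) := by
    intro k x
    rw [hp]
    rw [mchar_apply]
    have h : ∀ i ∈ Finset.univ, fourier (k i) (((Bᵀ.mulVec x) i : ℝ) : AddCircle (1:ℝ))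
        = Complex.exp (2 * Real.pi * Complex.I * ((k i : ℝ) * (Bᵀ.mulVec x) i : ℝ)) := by
      intro i _
      rw [fourier_coe_apply]
      push_cast
      ring_nf
    rw [Finset.prod_congr rfl h, ← Complex.exp_sum]
    congr 1
    rw [← Finset.mul_sum]
    congr 1
    have hsum : ∑ i, ((k i : ℝ) * (Bᵀ.mulVec x) i : ℝ)
        = ∑ i, (B.mulVec fun i => (k i : ℝ)) i * x i := by
      have := Matrix.dotProduct_mulVec (fun i => (k i : ℝ)) Bᵀ x
      rw [Matrix.vecMul_transpose] at this
      exact this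
    exact_mod_cast congrArg Complex.ofReal hsum
  -- the continuous linear functional Λ φ = ∫ φ(p x) g(x) dx
  have hφint : ∀ φ : C(Torus n, ℂ), Integrable (fun x => φ (p x) * g x) := by
    intro φ
    refine hg.bdd_mul (c := ‖φ‖) ?_ ?_
    · exact (φ.continuous.comp hpcont).aestronglyMeasurable
    · exact Filter.Eventually.of_forall fun x => φ.norm_coe_le_norm (p x)
  set Λ₀ : C(Torus n, ℂ) →ₗ[ℂ] ℂ :=
    { toFun := fun φ => ∫ x, φ (p x) * g x
      map_add' := by
        intro φ φ'
        simp only [ContinuousMap.add_apply]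
        rw [← integral_add (hφint φ) (hφint φ')]
        congr 1; funext x; ring
      map_smul' := by
        intro c φ
        simp only [ContinuousMap.smul_apply, smul_eq_mul, RingHom.id_apply]
        rw [← integral_const_mul]
        congr 1; funext x; ring } with hΛ₀
  have hΛ₀app : ∀ φ : C(Torus n, ℂ), Λ₀ φ = ∫ x, φ (p x) * g x := fun φ => rfl
  have hΛbound : ∀ φ : C(Torus n, ℂ), ‖Λ₀ φ‖ ≤ (∫ x, ‖g x‖) * ‖φ‖ := by
    intro φ
    rw [hΛ₀app]
    calc ‖∫ x, φ (p x) * g x‖ ≤ ∫ x, ‖φ (p x) * g x‖ := norm_integral_le_integral_norm _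
    _ ≤ ∫ x, ‖φ‖ * ‖g x‖ := by
        apply integral_mono (hφint φ).norm (hg.norm.const_mul _)
        intro x
        show ‖φ (p x) * g x‖ ≤ ‖φ‖ * ‖g x‖
        rw [norm_mul]
        exact mul_le_mul_of_nonneg_right (φ.norm_coe_le_norm (p x)) (norm_nonneg _)
    _ = (∫ x, ‖g x‖) * ‖φ‖ := by rw [integral_const_mul]; ring
  set Λ : C(Torus n, ℂ) →L[ℂ] ℂ := LinearMap.mkContinuous Λ₀ (∫ x, ‖g x‖) hΛbound with hΛdef
  have hΛapp : ∀ φ : C(Torus n, ℂ), Λ φ = ∫ x, φ (p x) * g x := fun φ => rfl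
  have hΛchar : ∀ k : Fin n → ℤ, Λ (mchar k) = 0 := by
    intro k
    have heq : Λ (mchar k) = fourierT g (B.mulVec fun i => (k i : ℝ)) := by
      rw [hΛapp, fourierT]
      congr 1; funext x; rw [hcharp k x]; ring
    rw [heq, hFT k]
  have hΛ0 : Λ = 0 := by
    apply ContinuousLinearMap.ext_on (dense_span_mchar n)
    rintro - ⟨k, rfl⟩
    simpa using hΛchar k
  -- main step : g vanishes a.e. on Y
  have hY0 : ∀ᵐ x : Fin n → ℝ, x ∈ Y → g x = 0 := by
    apply hY.ae_eq_zero_of_integral_contDiff_smul_eq_zero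
      (hg.locallyIntegrable.locallyIntegrableOn Y)
    intro ψ hψsmooth hψcomp hψsupp
    obtain ⟨R, hR⟩ := hψcomp.isBounded.subset_closedBall 0
    -- local finiteness of the periodization
    have hfin : ∀ x₀ : Fin n → ℝ, ∃ F : Finset (Fin n → ℤ),
        ∀ x ∈ Metric.ball x₀ 1, ∀ k ∉ F, ψ (x + ν k) = 0 := by
      intro x₀
      set M' : (Fin n → ℝ) →L[ℝ] (Fin n → ℝ) :=
        LinearMap.toContinuousLinearMap (Matrix.mulVecLin Bᵀ) with hM'
      set C : ℝ := ‖M'‖ * (R + (‖x₀‖ + 1)) with hC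
      set J : ℤ := ⌈C⌉ with hJ
      refine ⟨Fintype.piFinset fun _ => Finset.Icc (-J) J, ?_⟩
      intro x hx k hk
      by_contra hne
      apply hk
      rw [Fintype.mem_piFinset]
      intro i
      rw [Finset.mem_Icc, ← abs_le]
      have hxk : x + ν k ∈ tsupport ψ := subset_tsupport ψ hne
      have h1k : ‖ν k‖ ≤ R + (‖x₀‖ + 1) := by
        have hrw : ν k = (x + ν k) - x := (add_sub_cancel_left x (ν k)).symm
        rw [hrw]
        have hxK : ‖x + ν k‖ ≤ R := by
          have := hR hxk
          rwa [Metric.mem_closedBall, dist_zero_right] at this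
        have hxx : ‖x‖ ≤ ‖x₀‖ + 1 := by
          have hd : ‖x - x₀‖ < 1 := by
            have := Metric.mem_ball.mp hx
            rwa [dist_eq_norm] at this
          calc ‖x‖ = ‖(x - x₀) + x₀‖ := by rw [sub_add_cancel]
          _ ≤ ‖x - x₀‖ + ‖x₀‖ := norm_add_le _ _
          _ ≤ ‖x₀‖ + 1 := by linarith
        calc ‖(x + ν k) - x‖ ≤ ‖x + ν k‖ + ‖x‖ := norm_sub_le _ _
        _ ≤ R + (‖x₀‖ + 1) := add_le_add hxK hxx
      have h2k : ‖(fun i => (k i : ℝ))‖ ≤ C := by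
        have hMν : M' (ν k) = fun i => (k i : ℝ) := by
          show Bᵀ.mulVec (ν k) = _
          exact h1 k
        rw [← hMν, hC]
        calc ‖M' (ν k)‖ ≤ ‖M'‖ * ‖ν k‖ := M'.le_opNorm _
        _ ≤ ‖M'‖ * (R + (‖x₀‖ + 1)) := by
            exact mul_le_mul_of_nonneg_left h1k (norm_nonneg _)
      have h3 : |(k i : ℝ)| ≤ C := by
        have hni := norm_le_pi_norm (fun i => (k i : ℝ)) i
        have : ‖((k i : ℝ))‖ ≤ C := le_trans hni h2k
        rwa [Real.norm_eq_abs] at this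
      have h4 : ((|k i| : ℤ) : ℝ) ≤ (J : ℝ) := by
        rw [Int.cast_abs]
        exact le_trans h3 (Int.le_ceil C)
      exact_mod_cast h4
    -- the periodization of ψ
    set Φ : (Fin n → ℝ) → ℝ := fun x => ∑' k : Fin n → ℤ, ψ (x + ν k) with hΦ
    have hΦrep : ∀ x₀ (F : Finset (Fin n → ℤ)),
        (∀ x ∈ Metric.ball x₀ 1, ∀ k ∉ F, ψ (x + ν k) = 0) →
        ∀ x ∈ Metric.ball x₀ 1, Φ x = ∑ k ∈ F, ψ (x + ν k) := by
      intro x₀ F hF x hx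
      exact tsum_eq_sum fun k hk => hF x hx k hk
    have hΦcont : Continuous Φ := by
      rw [continuous_iff_continuousAt]
      intro x₀
      obtain ⟨F, hF⟩ := hfin x₀
      have heq : Φ =ᶠ[nhds x₀] fun x => ∑ k ∈ F, ψ (x + ν k) :=
        Filter.eventuallyEq_of_mem (Metric.ball_mem_nhds x₀ one_pos)
          fun x hx => hΦrep x₀ F hF x hx
      refine ContinuousAt.congr ?_ heq.symm
      apply Continuous.continuousAt
      exact continuous_finset_sum _ fun k _ =>
        hψsmooth.continuous.comp (continuous_id.add continuous_const)
    have hΦper : ∀ (x : Fin n → ℝ) (k₀ : Fin n → ℤ), Φ (x + ν k₀) = Φ x := by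
      intro x k₀
      show (∑' k : Fin n → ℤ, ψ (x + ν k₀ + ν k)) = ∑' k : Fin n → ℤ, ψ (x + ν k)
      rw [← (Equiv.addLeft k₀).tsum_eq (fun k => ψ (x + ν k))]
      congr 1
      funext k
      simp only [Equiv.coe_addLeft]
      rw [hνadd, ← add_assoc]
    have hΦY : ∀ x ∈ Y, Φ x = ψ x := by
      intro x hxY
      have h0 : ∀ k : Fin n → ℤ, k ≠ 0 → ψ (x + ν k) = 0 := by
        intro k hkne
        by_contra hne
        have hmem : x + ν k ∈ tsupport ψ := subset_tsupport ψ hne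
        have hY1 : x + ν k ∈ Y := hψsupp hmem
        have hd := hdisj k 0 hkne
        have hmem2 : x + ν k ∈
            (fun θ => θ + (B⁻¹)ᵀ.mulVec fun i => (((0 : Fin n → ℤ)) i : ℝ)) '' Y :=
          ⟨x + ν k, hY1, by
            show (x + ν k) + ν 0 = x + ν k
            rw [hν0, add_zero]⟩
        exact Set.disjoint_left.mp hd ⟨x, hxY, rfl⟩ hmem2
      have ht := tsum_eq_single (L := SummationFilter.unconditional _) (f := fun k : Fin n → ℤ => ψ (x + ν k)) 0 h0
      show (∑' k : Fin n → ℤ, ψ (x + ν k)) = ψ x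
      rw [ht]
      show ψ (x + ν 0) = ψ x
      rw [hν0, add_zero]
    -- descend to the torus
    set Φb : Torus n → ℝ := Φ ∘ surjInv hpsurj with hΦb
    have hΦbp : ∀ x, Φb (p x) = Φ x := by
      intro x
      have h' : p (surjInv hpsurj (p x)) = p x := surjInv_eq hpsurj (p x)
      obtain ⟨k, hk⟩ := hpfiber _ _ h'
      have hper := hΦper (surjInv hpsurj (p x)) k
      rw [← hk] at hper
      show Φ (surjInv hpsurj (p x)) = Φ x
      exact hper.symm
    have hΦbcont : Continuous Φb := by
      rw [hpquot.continuous_iff]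
      have : Φb ∘ p = Φ := funext hΦbp
      rw [this]
      exact hΦcont
    set φb : C(Torus n, ℂ) := ⟨fun z => (Φb z : ℂ), Complex.continuous_ofReal.comp hΦbcont⟩
      with hφb
    have hzero : Λ φb = 0 := by rw [hΛ0]; rfl
    have hfinal : Λ φb = ∫ x, ψ x • g x := by
      rw [hΛapp]
      apply integral_congr_ae
      filter_upwards [hsupp] with x hx
      by_cases hxY : x ∈ Y
      · have : φb (p x) = (ψ x : ℂ) := by
          show ((Φb (p x) : ℝ) : ℂ) = (ψ x : ℂ)
          rw [hΦbp, hΦY x hxY]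
        rw [this, Complex.real_smul]
      · rw [hx hxY, mul_zero, smul_zero]
    rw [← hfinal, hzero]
  filter_upwards [hY0, hsupp] with x hx1 hx2
  by_cases hx : x ∈ Y
  · exact hx1 hx
  · exact hx2 hx

end
end

section
/- Let J and K be measurable range functions for a separable Hilbert space H based on a measure space (X,Σ,μ). Then M_J = M_K if and only if J(x) = K(x) for μ-almost every x ∈ X. -/
open MeasureTheory

noncomputable section

/-- Pettis measurability: weakly measurable into a second-countable Hilbert space
is strongly measurable. -/
lemma aux_sm {X : Type*} [MeasurableSpace X] {H : Type*} [NormedAddCommGroup H]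
    [InnerProductSpace ℂ H] [SecondCountableTopology H] [CompleteSpace H]
    (f : X → H) (h : ∀ η : H, Measurable fun x => (inner ℂ (f x) η : ℂ)) :
    StronglyMeasurable f := by
  obtain ⟨w, b, hb⟩ := exists_hilbertBasis ℂ H
  have ho : Orthonormal ℂ ((↑) : w → H) := by rw [← hb]; exact b.orthonormal
  have hcnt : Countable ↥w := by
    apply Pairwise.countable_of_isOpen_disjoint
      (s := fun i : w => Metric.ball (i : H) (1/2))
    · intro i j hij
      have h2 : ‖(i : H) - (j : H)‖ ^ 2 = 2 := by
        rw [@norm_sub_sq ℂ]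
        have h1 : ‖(i : H)‖ = 1 := ho.1 i
        have h1' : ‖(j : H)‖ = 1 := ho.1 j
        have h0 : (inner ℂ ((i : w) : H) ((j : w) : H) : ℂ) = 0 := ho.2 hij
        rw [h0, h1, h1']; norm_num
      have hd : (1 : ℝ) ≤ dist (i : H) (j : H) := by
        rw [dist_eq_norm]
        nlinarith [norm_nonneg ((i : H) - (j : H))]
      apply Metric.ball_disjoint_ball
      linarith
    · intro i; exact Metric.isOpen_ball
    · intro i; exact ⟨i, Metric.mem_ball_self (by norm_num)⟩
  have hmeas : ∀ i : w, Measurable fun x => (inner ℂ ((i : w) : H) (f x) : ℂ) := by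
    intro i
    have : (fun x => (inner ℂ ((i : w) : H) (f x) : ℂ))
        = fun x => (starRingEnd ℂ) (inner ℂ (f x) ((i : w) : H)) := by
      ext x; rw [inner_conj_symm]
    rw [this]
    exact (Complex.continuous_conj.measurable).comp (h _)
  have hterm : ∀ t : Finset w, StronglyMeasurable
      (fun x => ∑ i ∈ t, (inner ℂ ((i : w) : H) (f x) : ℂ) • ((i : w) : H)) := by
    intro t
    apply Finset.stronglyMeasurable_fun_sum
    intro i _
    exact (continuous_id.smul continuous_const).comp_stronglyMeasurable
      ((hmeas i).stronglyMeasurable)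
  apply stronglyMeasurable_of_tendsto (Filter.atTop : Filter (Finset w)) hterm
  rw [tendsto_pi_nhds]
  intro x
  have h2 := b.hasSum_repr (f x)
  rw [show (fun i => b.repr (f x) i • b i)
      = fun i : w => (inner ℂ ((i : w) : H) (f x) : ℂ) • ((i : w) : H) from
    funext fun i => by rw [b.repr_apply_apply, hb]] at h2
  exact h2

/-- One inclusion: if `M_J ⊆ M_K` then `J x ≤ K x` a.e. -/
lemma aux_incl {X : Type*} [MeasurableSpace X] (μ : Measure X) [SigmaFinite μ]
    {H : Type*} [NormedAddCommGroup H] [InnerProductSpace ℂ H] [CompleteSpace H]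
    [SecondCountableTopology H]
    (J K : X → Submodule ℂ H)
    (hJcl : ∀ x, Submodule.HasOrthogonalProjection (J x))
    (hKcl : ∀ x, Submodule.HasOrthogonalProjection (K x))
    (hJmeas : ∀ ξ η : H, Measurable fun x =>
      (inner ℂ ((@Submodule.orthogonalProjectionOnto ℂ H _ _ _ (J x) (hJcl x) ξ : J x) : H) η : ℂ))
    (hsub : {F : Lp H 2 μ | ∀ᵐ x ∂μ, (F : X → H) x ∈ J x} ⊆
      {F : Lp H 2 μ | ∀ᵐ x ∂μ, (F : X → H) x ∈ K x}) :
    ∀ᵐ x ∂μ, J x ≤ K x := by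
  haveI := fun x => hJcl x
  haveI := fun x => hKcl x
  obtain ⟨D, hDc, hDd⟩ := TopologicalSpace.exists_countable_dense H
  have hsm : ∀ ξ : H, StronglyMeasurable
      (fun x => (@Submodule.orthogonalProjectionOnto ℂ H _ _ _ (J x) (hJcl x) ξ : H)) :=
    fun ξ => aux_sm _ (hJmeas ξ)
  have hPle : ∀ (x : X) (ξ : H),
      ‖(@Submodule.orthogonalProjectionOnto ℂ H _ _ _ (J x) (hJcl x) ξ : H)‖ ≤ ‖ξ‖ := by
    intro x ξ
    calc ‖(@Submodule.orthogonalProjectionOnto ℂ H _ _ _ (J x) (hJcl x) ξ : H)‖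
        = ‖@Submodule.orthogonalProjectionOnto ℂ H _ _ _ (J x) (hJcl x) ξ‖ := rfl
      _ ≤ ‖@Submodule.orthogonalProjectionOnto ℂ H _ _ _ (J x) (hJcl x)‖ * ‖ξ‖ :=
          ContinuousLinearMap.le_opNorm _ _
      _ ≤ 1 * ‖ξ‖ := by
          gcongr
          exact Submodule.orthogonalProjectionOnto_norm_le _
      _ = ‖ξ‖ := one_mul _
  have key : ∀ ξ : H, ∀ n : ℕ, ∀ᵐ x ∂μ, x ∈ spanningSets μ n →
      (@Submodule.orthogonalProjectionOnto ℂ H _ _ _ (J x) (hJcl x) ξ : H) ∈ K x := by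
    intro ξ n
    set A := spanningSets μ n with hA_def
    have hA : MeasurableSet A := measurableSet_spanningSets μ n
    have hAfin : μ A < ⊤ := measure_spanningSets_lt_top μ n
    set g : X → H :=
      A.indicator (fun x => (@Submodule.orthogonalProjectionOnto ℂ H _ _ _ (J x) (hJcl x) ξ : H)) with hg_def
    have hmem : MemLp g 2 μ := by
      rw [hg_def, memLp_indicator_iff_restrict hA]
      haveI : IsFiniteMeasure (μ.restrict A) :=
        ⟨by rwa [Measure.restrict_apply_univ]⟩
      exact MemLp.of_bound ((hsm ξ).aestronglyMeasurable) ‖ξ‖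
        (Filter.Eventually.of_forall fun x => hPle x ξ)
    set F := hmem.toLp g with hF_def
    have hFJ : F ∈ {F : Lp H 2 μ | ∀ᵐ x ∂μ, (F : X → H) x ∈ J x} := by
      filter_upwards [hmem.coeFn_toLp] with x hx
      rw [hx, hg_def]
      by_cases hxA : x ∈ A
      · rw [Set.indicator_of_mem hxA]; exact SetLike.coe_mem _
      · rw [Set.indicator_of_notMem hxA]; exact (J x).zero_mem
    have hFK := hsub hFJ
    filter_upwards [hFK, hmem.coeFn_toLp] with x h1 h2 hxA
    rw [h2, hg_def, Set.indicator_of_mem hxA] at h1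
    exact h1
  have key2 : ∀ᵐ x ∂μ, ∀ ξ ∈ D,
      (@Submodule.orthogonalProjectionOnto ℂ H _ _ _ (J x) (hJcl x) ξ : H) ∈ K x := by
    rw [ae_ball_iff hDc]
    intro ξ _
    filter_upwards [ae_all_iff.2 (key ξ)] with x hx
    have : x ∈ ⋃ n, spanningSets μ n := by
      rw [iUnion_spanningSets]; trivial
    obtain ⟨n, hn⟩ := Set.mem_iUnion.1 this
    exact hx n hn
  filter_upwards [key2] with x hx
  intro v hv
  have hKclosed : IsClosed ((K x : Set H)) := by
    rw [← (K x).orthogonal_orthogonal]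
    exact Submodule.isClosed_orthogonal _
  have hcont : Continuous fun ξ : H =>
      (@Submodule.orthogonalProjectionOnto ℂ H _ _ _ (J x) (hJcl x) ξ : H) :=
    ((J x).subtypeL.comp (@Submodule.orthogonalProjectionOnto ℂ H _ _ _ (J x) (hJcl x))).continuous
  have hall : (@Submodule.orthogonalProjectionOnto ℂ H _ _ _ (J x) (hJcl x) v : H) ∈ K x := by
    have hclset : IsClosed {ξ : H |
        (@Submodule.orthogonalProjectionOnto ℂ H _ _ _ (J x) (hJcl x) ξ : H) ∈ K x} :=
      hKclosed.preimage hcont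
    have hvD : v ∈ closure D := by rw [hDd.closure_eq]; trivial
    exact hclset.closure_subset_iff.2 (fun d hd => hx d hd) hvD
  rwa [← Submodule.starProjection_apply, Submodule.starProjection_eq_self_iff.2 hv] at hall

theorem statement14 {X : Type*} [MeasurableSpace X] (μ : Measure X) [SigmaFinite μ]
    {H : Type*} [NormedAddCommGroup H] [InnerProductSpace ℂ H] [CompleteSpace H]
    [SecondCountableTopology H]
    (J K : X → Submodule ℂ H)
    (hJcl : ∀ x, Submodule.HasOrthogonalProjection (J x))
    (hKcl : ∀ x, Submodule.HasOrthogonalProjection (K x))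
    (hJmeas : ∀ ξ η : H, Measurable fun x =>
      @inner ℂ H _ ((J x).subtypeL (@Submodule.orthogonalProjectionOnto ℂ H _ _ _ (J x) (hJcl x) ξ)) η)
    (hKmeas : ∀ ξ η : H, Measurable fun x =>
      @inner ℂ H _ ((K x).subtypeL (@Submodule.orthogonalProjectionOnto ℂ H _ _ _ (K x) (hKcl x) ξ)) η) :
    {F : Lp H 2 μ | ∀ᵐ x ∂μ, (F : X → H) x ∈ J x} =
      {F : Lp H 2 μ | ∀ᵐ x ∂μ, (F : X → H) x ∈ K x} ↔
    ∀ᵐ x ∂μ, J x = K x := by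
  constructor
  · intro h
    have h1 := aux_incl μ J K hJcl hKcl hJmeas (le_of_eq h)
    have h2 := aux_incl μ K J hKcl hJcl hKmeas (le_of_eq h.symm)
    filter_upwards [h1, h2] with x hx1 hx2
    exact le_antisymm hx1 hx2
  · intro h
    ext F
    simp only [Set.mem_setOf_eq]
    constructor <;> intro hF <;> filter_upwards [hF, h] with x hx he
    · rw [← he]; exact hx
    · rw [he]; exact hx

end
end
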